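/- Let m, n ∈ ℝ³ and a_m, b_m, c_n, d_n ∈ ℝ³, write ⟨·,·⟩ for the standard inner product, and define the Lie bracket of C¹ vector fields on ℝ³ by [V,W](x) = DV(x)(W(x)) − DW(x)(V(x)). Then for all x ∈ ℝ³: [a_m·cos⟨m,·⟩ + b_m·sin⟨m,·⟩, c_n·cos⟨n,·⟩ + d_n·sin⟨n,·⟩](x) − [−a_m·sin⟨m,·⟩ + b_m·cos⟨m,·⟩, −c_n·sin⟨n,·⟩ + d_n·cos⟨n,·⟩](x) = (⟨m,c_n⟩·b_m + ⟨m,d_n⟩·a_m − ⟨n,b_m⟩·c_n − ⟨n,a_m⟩·d_n)·cos⟨m+n, x⟩ + (⟨m,d_n⟩·b_m − ⟨m,c_n⟩·a_m − ⟨n,b_m⟩·d_n + ⟨n,a_m⟩·c_n)·sin⟨m+n, x⟩. -/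
import Mathlib


open Set Real

/-- The standard inner product on `ℝ³`. -/
def dot3 (m x : Fin 3 → ℝ) : ℝ := ∑ i, m i * x i

/-- The Lie bracket of vector fields on `ℝ³`: `[V,W](x) = DV(x)(W(x)) − DW(x)(V(x))`. -/
noncomputable def lieVF3 (V W : (Fin 3 → ℝ) → (Fin 3 → ℝ)) (x : Fin 3 → ℝ) : Fin 3 → ℝ :=
  fderiv ℝ V x (W x) - fderiv ℝ W x (V x)

/-- `dot3 m` as a continuous linear map. -/
noncomputable def dotCLM (m : Fin 3 → ℝ) : (Fin 3 → ℝ) →L[ℝ] ℝ :=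
  LinearMap.toContinuousLinearMap
    { toFun := dot3 m
      map_add' := by intro x y; simp [dot3, mul_add, Finset.sum_add_distrib]
      map_smul' := by intro c x; simp [dot3, Finset.mul_sum, mul_left_comm] }

lemma dotCLM_apply (m v : Fin 3 → ℝ) : dotCLM m v = dot3 m v := rfl

lemma hd (m : Fin 3 → ℝ) (x : Fin 3 → ℝ) : HasFDerivAt (dot3 m) (dotCLM m) x :=
  (dotCLM m).hasFDerivAt

lemma key1 (m a b : Fin 3 → ℝ) (x : Fin 3 → ℝ) :
    HasFDerivAt (fun y => Real.cos (dot3 m y) • a + Real.sin (dot3 m y) • b)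
      ((((-Real.sin (dot3 m x)) • dotCLM m).smulRight a)
        + (((Real.cos (dot3 m x)) • dotCLM m).smulRight b)) x :=
  ((hd m x).cos.smul_const a).add ((hd m x).sin.smul_const b)

lemma key2 (m a b : Fin 3 → ℝ) (x : Fin 3 → ℝ) :
    HasFDerivAt (fun y => -(Real.sin (dot3 m y) • a) + Real.cos (dot3 m y) • b)
      ((-(((Real.cos (dot3 m x)) • dotCLM m).smulRight a))
        + (((-Real.sin (dot3 m x)) • dotCLM m).smulRight b)) x :=
  ((hd m x).sin.smul_const a).neg.add ((hd m x).cos.smul_const b)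

/-- The combined bracket formula on `𝕋³`, producing the frequency `m + n` from general
trigonometric vector fields with frequencies `m` and `n`. -/
theorem stmt_16 (m n am bm cn dn : Fin 3 → ℝ) :
    ∀ x : Fin 3 → ℝ,
      lieVF3 (fun y => Real.cos (dot3 m y) • am + Real.sin (dot3 m y) • bm)
             (fun y => Real.cos (dot3 n y) • cn + Real.sin (dot3 n y) • dn) x
        - lieVF3 (fun y => -(Real.sin (dot3 m y) • am) + Real.cos (dot3 m y) • bm)
                 (fun y => -(Real.sin (dot3 n y) • cn) + Real.cos (dot3 n y) • dn) x
        = Real.cos (dot3 (m + n) x) •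
            (dot3 m cn • bm + dot3 m dn • am - dot3 n bm • cn - dot3 n am • dn)
          + Real.sin (dot3 (m + n) x) •
            (dot3 m dn • bm - dot3 m cn • am - dot3 n bm • dn + dot3 n am • cn) := by
  intro x
  have hmn : dot3 (m + n) x = dot3 m x + dot3 n x := by
    simp [dot3, add_mul, Finset.sum_add_distrib]
  unfold lieVF3
  rw [(key1 m am bm x).fderiv, (key1 n cn dn x).fderiv,
      (key2 m am bm x).fderiv, (key2 n cn dn x).fderiv,
      hmn, Real.cos_add, Real.sin_add]
  funext i
  simp [dotCLM_apply, dot3, Fin.sum_univ_three, mul_add, add_mul]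
  ring
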